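/- Suppose a = ∑_{i=1}^n λ_i p_i and b = ∑_{j=1}^k β_j q_j where {p_1,…,p_n} are mutually orthogonal nonzero idempotents summing to 1, and likewise {q_1,…,q_k}, with the λ_i distinct and the β_j distinct. Then ϱ(a,b) = sup { |λ_i - β_j| : p_i q_j ≠ 0 }. -/

import Mathlib

open Filter in
noncomputable def varrho {A : Type*} [NormedRing A] (a b : A) : ℝ :=
  atTop.limsup fun n : ℕ => ‖(fun x => a * x - x * b)^[n] 1‖ ^ ((n : ℝ)⁻¹)

open Filter

theorem stmt_9 {A : Type*} [NormedRing A] [NormedAlgebra ℂ A] [CompleteSpace A]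
    (n k : ℕ) (lam : Fin n → ℂ) (beta : Fin k → ℂ)
    (hlam : Function.Injective lam) (hbeta : Function.Injective beta)
    (p : Fin n → A) (q : Fin k → A)
    (hp0 : ∀ i, p i ≠ 0) (hq0 : ∀ j, q j ≠ 0)
    (hpidem : ∀ i, p i * p i = p i) (hqidem : ∀ j, q j * q j = q j)
    (hporth : ∀ i i', i ≠ i' → p i * p i' = 0)
    (hqorth : ∀ j j', j ≠ j' → q j * q j' = 0)
    (hpsum : ∑ i, p i = 1) (hqsum : ∑ j, q j = 1) :
    varrho (∑ i, lam i • p i) (∑ j, beta j • q j) =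
      sSup {d : ℝ | ∃ i j, p i * q j ≠ 0 ∧ d = ‖lam i - beta j‖} := by
  classical
  set a : A := ∑ i, lam i • p i with ha
  set b : A := ∑ j, beta j • q j with hb
  set L : A →ₗ[ℂ] A := LinearMap.mulLeft ℂ a - LinearMap.mulRight ℂ b with hLdef
  have hfun : (fun x : A => a * x - x * b) = ⇑L := by
    funext x; simp [hLdef]
  -- basic multiplication lemmas
  have hap : ∀ i j, a * (p i * q j) = lam i • (p i * q j) := by
    intro i j
    rw [ha, Finset.sum_mul, Finset.sum_eq_single i]
    · rw [smul_mul_assoc, ← mul_assoc, hpidem]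
    · intro i' _ hne
      rw [smul_mul_assoc, ← mul_assoc, hporth i' i hne, zero_mul, smul_zero]
    · simp
  have hqb : ∀ i j, (p i * q j) * b = beta j • (p i * q j) := by
    intro i j
    rw [hb, Finset.mul_sum, Finset.sum_eq_single j]
    · rw [mul_smul_comm, mul_assoc, hqidem]
    · intro j' _ hne
      rw [mul_smul_comm, mul_assoc, hqorth j j' (Ne.symm hne), mul_zero, smul_zero]
    · simp
  have hLpq : ∀ i j, L (p i * q j) = (lam i - beta j) • (p i * q j) := by
    intro i j
    have : L (p i * q j) = a * (p i * q j) - (p i * q j) * b := by simp [hLdef]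
    rw [this, hap, hqb, sub_smul]
  -- key formula for iterates
  have key : ∀ m : ℕ, L^[m] 1 = ∑ i, ∑ j, ((lam i - beta j) ^ m) • (p i * q j) := by
    intro m
    induction m with
    | zero =>
      simp only [Function.iterate_zero, id_eq, pow_zero, one_smul]
      rw [← Finset.sum_mul_sum, hpsum, hqsum, one_mul]
    | succ m ih =>
      rw [Function.iterate_succ_apply', ih, map_sum]
      refine Finset.sum_congr rfl fun i _ => ?_
      rw [map_sum]
      refine Finset.sum_congr rfl fun j _ => ?_
      rw [map_smul, hLpq, smul_smul, ← pow_succ]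
  have sandwich : ∀ (i0 i : Fin n) (j j0 : Fin k),
      p i0 * (p i * q j) * q j0 = (p i0 * p i) * (q j * q j0) := by
    intro i0 i j j0
    rw [← mul_assoc (p i0) (p i) (q j), mul_assoc (p i0 * p i) (q j) (q j0)]
  have hproj : ∀ (i0 : Fin n) (j0 : Fin k) (m : ℕ),
      p i0 * (L^[m] 1) * q j0 = ((lam i0 - beta j0) ^ m) • (p i0 * q j0) := by
    intro i0 j0 m
    rw [key, Finset.mul_sum, Finset.sum_mul, Finset.sum_eq_single i0]
    · rw [Finset.mul_sum, Finset.sum_mul, Finset.sum_eq_single j0]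
      · rw [mul_smul_comm, smul_mul_assoc, sandwich, hpidem, hqidem]
      · intro j' _ hne
        rw [mul_smul_comm, smul_mul_assoc, sandwich, hqorth j' j0 hne, mul_zero, smul_zero]
      · simp
    · intro i' _ hne
      rw [Finset.mul_sum, Finset.sum_mul]
      refine Finset.sum_eq_zero fun j' _ => ?_
      rw [mul_smul_comm, smul_mul_assoc, sandwich, hporth i0 i' (fun h => hne h.symm), zero_mul, smul_zero]
    · simp
  -- rewrite the goal
  have hvr : varrho a b = atTop.limsup fun m : ℕ => ‖L^[m] (1 : A)‖ ^ ((m : ℝ)⁻¹) := by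
    rw [varrho, hfun]
  rw [hvr]
  by_cases hS : ∃ ij : Fin n × Fin k, p ij.1 * q ij.2 ≠ 0
  · obtain ⟨ij0, hij0⟩ := hS
    set S : Finset (Fin n × Fin k) := Finset.univ.filter (fun ij => p ij.1 * q ij.2 ≠ 0) with hSdef
    have hS' : S.Nonempty := ⟨ij0, by simp [hSdef, hij0]⟩
    set f : Fin n × Fin k → ℝ := fun ij => ‖lam ij.1 - beta ij.2‖ with hfdef
    set M : ℝ := S.sup' hS' f with hMdef
    obtain ⟨ijm, hijm_mem, hijm⟩ := Finset.exists_mem_eq_sup' hS' f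
    have hijm_ne : p ijm.1 * q ijm.2 ≠ 0 := by
      simpa [hSdef] using hijm_mem
    have hM0 : 0 ≤ M := le_trans (norm_nonneg _) (Finset.le_sup' f hijm_mem)
    -- RHS equals M
    have hRHS : sSup {d : ℝ | ∃ i j, p i * q j ≠ 0 ∧ d = ‖lam i - beta j‖} = M := by
      apply le_antisymm
      · refine csSup_le ⟨f ij0, ⟨ij0.1, ij0.2, hij0, rfl⟩⟩ ?_
        rintro d ⟨i, j, hpq, rfl⟩
        exact Finset.le_sup' f (by simp [hSdef, hpq] : (i, j) ∈ S)
      · apply le_csSup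
        · refine ⟨M, ?_⟩
          rintro d ⟨i, j, hpq, rfl⟩
          exact Finset.le_sup' f (by simp [hSdef, hpq] : (i, j) ∈ S)
        · exact ⟨ijm.1, ijm.2, hijm_ne, hijm⟩
    rw [hRHS]
    -- constants
    set C : ℝ := ∑ i, ∑ j, ‖p i * q j‖ with hCdef
    have hC0 : 0 < C := by
      have h1 : ‖p ij0.1 * q ij0.2‖ > 0 := norm_pos_iff.mpr hij0
      have h2 : ‖p ij0.1 * q ij0.2‖ ≤ ∑ j : Fin k, ‖p ij0.1 * q j‖ :=
        Finset.single_le_sum (f := fun j : Fin k => ‖p ij0.1 * q j‖)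
          (fun j _ => norm_nonneg _) (Finset.mem_univ _)
      have h3 : (∑ j, ‖p ij0.1 * q j‖) ≤ C :=
        Finset.single_le_sum (f := fun i => ∑ j, ‖p i * q j‖)
          (fun i _ => Finset.sum_nonneg fun j _ => norm_nonneg _) (Finset.mem_univ _)
      linarith
    set c₁ : ℝ := ‖p ijm.1 * q ijm.2‖ / (‖p ijm.1‖ * ‖q ijm.2‖) with hc1def
    have hpn : 0 < ‖p ijm.1‖ := norm_pos_iff.mpr (hp0 _)
    have hqn : 0 < ‖q ijm.2‖ := norm_pos_iff.mpr (hq0 _)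
    have hc1pos : 0 < c₁ := div_pos (norm_pos_iff.mpr hijm_ne) (mul_pos hpn hqn)
    -- upper bound on norms
    have hupper : ∀ m : ℕ, ‖L^[m] (1 : A)‖ ≤ M ^ m * C := by
      intro m
      rw [key]
      calc ‖∑ i, ∑ j, ((lam i - beta j) ^ m) • (p i * q j)‖
          ≤ ∑ i, ‖∑ j, ((lam i - beta j) ^ m) • (p i * q j)‖ := norm_sum_le _ _
        _ ≤ ∑ i, ∑ j, ‖((lam i - beta j) ^ m) • (p i * q j)‖ :=
            Finset.sum_le_sum fun i _ => norm_sum_le _ _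
        _ ≤ ∑ i, ∑ j, M ^ m * ‖p i * q j‖ := by
            refine Finset.sum_le_sum fun i _ => Finset.sum_le_sum fun j _ => ?_
            rw [norm_smul, norm_pow]
            by_cases hpq : p i * q j = 0
            · simp [hpq]
            · have : ‖lam i - beta j‖ ≤ M := by
                exact Finset.le_sup' f (by simp [hSdef, hpq] : (i, j) ∈ S)
              exact mul_le_mul_of_nonneg_right
                (pow_le_pow_left₀ (norm_nonneg _) this m) (norm_nonneg _)
        _ = M ^ m * C := by rw [hCdef, Finset.mul_sum]; simp [Finset.mul_sum]
    -- lower bound on norms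
    have hlower : ∀ m : ℕ, M ^ m * c₁ ≤ ‖L^[m] (1 : A)‖ := by
      intro m
      have h1 : ‖p ijm.1 * (L^[m] (1:A)) * q ijm.2‖ ≤ ‖p ijm.1‖ * ‖L^[m] (1:A)‖ * ‖q ijm.2‖ :=
        le_trans (norm_mul_le _ _) (mul_le_mul_of_nonneg_right (norm_mul_le _ _) (norm_nonneg _))
      rw [hproj, norm_smul, norm_pow] at h1
      have hMf : M = ‖lam ijm.1 - beta ijm.2‖ := by
        rw [hMdef, hijm]
      have h2 : M ^ m * ‖p ijm.1 * q ijm.2‖ ≤ ‖p ijm.1‖ * ‖L^[m] (1:A)‖ * ‖q ijm.2‖ := by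
        rw [hMf]; exact h1
      rw [hc1def, ← mul_div_assoc, div_le_iff₀ (mul_pos hpn hqn)]
      calc M ^ m * ‖p ijm.1 * q ijm.2‖ ≤ ‖p ijm.1‖ * ‖L^[m] (1:A)‖ * ‖q ijm.2‖ := h2
        _ = ‖L^[m] (1:A)‖ * (‖p ijm.1‖ * ‖q ijm.2‖) := by ring
    -- rpow helper
    have hpowr : ∀ (x : ℝ), 0 ≤ x → ∀ m : ℕ, m ≠ 0 → ((x ^ m : ℝ)) ^ ((m:ℝ)⁻¹) = x := by
      intro x hx m hm
      have hm' : ((m : ℝ)) ≠ 0 := Nat.cast_ne_zero.mpr hm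
      rw [← Real.rpow_natCast x m, ← Real.rpow_mul hx, mul_inv_cancel₀ hm', Real.rpow_one]
    -- the two bounding sequences tend to M
    have hgl : Tendsto (fun m : ℕ => M * c₁ ^ ((m:ℝ)⁻¹)) atTop (nhds M) := by
      have h := (tendsto_const_nhds (x := c₁) (f := atTop (α := ℕ))).rpow
        tendsto_inv_atTop_nhds_zero_nat (Or.inl hc1pos.ne')
      simpa [Real.rpow_zero] using h.const_mul M
    have hgu : Tendsto (fun m : ℕ => M * C ^ ((m:ℝ)⁻¹)) atTop (nhds M) := by
      have h := (tendsto_const_nhds (x := C) (f := atTop (α := ℕ))).rpow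
        tendsto_inv_atTop_nhds_zero_nat (Or.inl hC0.ne')
      simpa [Real.rpow_zero] using h.const_mul M
    refine Tendsto.limsup_eq (tendsto_of_tendsto_of_tendsto_of_le_of_le' hgl hgu ?_ ?_)
    · filter_upwards [eventually_ge_atTop 1] with m hm
      have hm0 : m ≠ 0 := by omega
      have h := Real.rpow_le_rpow (by positivity) (hlower m)
        (by positivity : (0:ℝ) ≤ (m:ℝ)⁻¹)
      rwa [Real.mul_rpow (pow_nonneg hM0 m) hc1pos.le, hpowr M hM0 m hm0] at h
    · filter_upwards [eventually_ge_atTop 1] with m hm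
      have hm0 : m ≠ 0 := by omega
      have h := Real.rpow_le_rpow (norm_nonneg _) (hupper m)
        (by positivity : (0:ℝ) ≤ (m:ℝ)⁻¹)
      rwa [Real.mul_rpow (pow_nonneg hM0 m) hC0.le, hpowr M hM0 m hm0] at h
  · push_neg at hS
    have h10 : (1 : A) = 0 := by
      have := key 0
      simp only [Function.iterate_zero, id_eq, pow_zero, one_smul] at this
      rw [this]
      exact Finset.sum_eq_zero fun i _ => Finset.sum_eq_zero fun j _ => hS (i, j)
    have hset : {d : ℝ | ∃ i j, p i * q j ≠ 0 ∧ d = ‖lam i - beta j‖} = ∅ := by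
      ext d; simp only [Set.mem_setOf_eq, Set.mem_empty_iff_false, iff_false]
      rintro ⟨i, j, hpq, _⟩; exact hpq (hS (i, j))
    rw [hset, Real.sSup_empty]
    have hz : ∀ᶠ m : ℕ in atTop, ‖L^[m] (1 : A)‖ ^ ((m : ℝ)⁻¹) = 0 := by
      filter_upwards [eventually_ge_atTop 1] with m hm
      have : L^[m] (1 : A) = 0 := by
        rw [key]
        exact Finset.sum_eq_zero fun i _ => Finset.sum_eq_zero fun j _ => by
          rw [hS (i, j), smul_zero]
      rw [this, norm_zero, Real.zero_rpow]
      positivity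
    rw [limsup_congr hz, limsup_const]
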